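/- Let E be a real inner product space, let ℓ ≥ 0 be a real number, and let p, a, b ∈ E satisfy ‖a − b‖ ≤ ℓ, ‖p − a‖ ≥ ℓ, and ‖p − b‖ ≥ ℓ. Then for every t ∈ [0,1], ‖p − ((1−t)•a + t•b)‖ ≥ (√3/2)·ℓ; that is, the distance from p to the segment with endpoints a and b is at least (√3/2)·ℓ. -/

import Mathlib

theorem dist_to_segment_lower_bound
    {E : Type*} [NormedAddCommGroup E] [InnerProductSpace ℝ E]
    (ℓ : ℝ) (hℓ : 0 ≤ ℓ) (p a b : E)
    (hab : ‖a - b‖ ≤ ℓ) (hpa : ℓ ≤ ‖p - a‖) (hpb : ℓ ≤ ‖p - b‖) :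
    ∀ t : ℝ, t ∈ Set.Icc (0 : ℝ) 1 →
      Real.sqrt 3 / 2 * ℓ ≤ ‖p - ((1 - t) • a + t • b)‖ := by
  intro t ht
  obtain ⟨ht0, ht1⟩ := ht
  set u := p - a with hu
  set v := p - b with hv
  have hx : p - ((1 - t) • a + t • b) = (1 - t) • u + t • v := by
    rw [hu, hv]
    have : (1 : ℝ) • p = p := one_smul ℝ p
    module
  have huv : a - b = v - u := by rw [hu, hv]; abel
  have h1 : ‖(1 - t) • u + t • v‖ ^ 2 =
      (1 - t) ^ 2 * ‖u‖ ^ 2 + 2 * ((1 - t) * t) * inner ℝ u v + t ^ 2 * ‖v‖ ^ 2 := by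
    rw [norm_add_sq_real, norm_smul, norm_smul, inner_smul_left, inner_smul_right]
    simp [Real.norm_eq_abs, mul_pow, sq_abs]
    ring
  have h2 : ‖v - u‖ ^ 2 = ‖v‖ ^ 2 - 2 * inner ℝ v u + ‖u‖ ^ 2 := by
    rw [norm_sub_sq_real]
  have hsym : (inner ℝ u v : ℝ) = inner ℝ v u := real_inner_comm v u
  have habsq : ‖v - u‖ ^ 2 ≤ ℓ ^ 2 := by
    rw [← huv]
    exact pow_le_pow_left₀ (norm_nonneg _) hab 2
  have hu2 : ℓ ^ 2 ≤ ‖u‖ ^ 2 := pow_le_pow_left₀ hℓ hpa 2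
  have hv2 : ℓ ^ 2 ≤ ‖v‖ ^ 2 := pow_le_pow_left₀ hℓ hpb 2
  have key : 3 / 4 * ℓ ^ 2 ≤ ‖(1 - t) • u + t • v‖ ^ 2 := by
    nlinarith [mul_nonneg ht0 (sub_nonneg.2 ht1), sq_nonneg (t - 1/2), sq_nonneg ℓ]
  rw [hx]
  have h3 : Real.sqrt 3 / 2 * ℓ = Real.sqrt (3 / 4 * ℓ ^ 2) := by
    rw [Real.sqrt_mul (by norm_num), Real.sqrt_sq hℓ,
      Real.sqrt_div (by norm_num : (0:ℝ) ≤ 3),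
      show (4:ℝ) = 2 ^ 2 by norm_num, Real.sqrt_sq (by norm_num : (0:ℝ) ≤ 2)]
  rw [h3]
  calc Real.sqrt (3 / 4 * ℓ ^ 2) ≤ Real.sqrt (‖(1 - t) • u + t • v‖ ^ 2) :=
        Real.sqrt_le_sqrt key
    _ = ‖(1 - t) • u + t • v‖ := Real.sqrt_sq (norm_nonneg _)
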